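/- Let ρ be a density operator and |χ⟩ a unit vector in the range of ρ. Then there exist α > 0, β ≥ 0 and a positive semidefinite operator ρ̃ such that ρ = α|χ⟩⟨χ| + β ρ̃. -/

import Mathlib

open Matrix Kronecker BigOperators
open scoped ComplexOrder

/-- Trace distance/norm with factor 1/2: `‖A‖ = ½ tr √(AᴴA)`. -/
noncomputable def trNorm {m : Type*} [Fintype m] [DecidableEq m] (A : Matrix m m ℂ) : ℝ :=
  (1 / 2) * ((((Matrix.posSemidef_conjTranspose_mul_self A).1.eigenvectorUnitary : Matrix m m ℂ) *
    diagonal (((↑) : ℝ → ℂ) ∘ Real.sqrt ∘ (Matrix.posSemidef_conjTranspose_mul_self A).1.eigenvalues) *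
    (star (Matrix.posSemidef_conjTranspose_mul_self A).1.eigenvectorUnitary : Matrix m m ℂ)).trace).re

/-- A density operator: positive semidefinite with unit trace. -/
def IsDensity {m : Type*} [Fintype m] (ρ : Matrix m m ℂ) : Prop :=
  ρ.PosSemidef ∧ ρ.trace = 1

/-- A pure state: a density operator that is a (rank-one) projector. -/
def IsPureState {m : Type*} [Fintype m] (ρ : Matrix m m ℂ) : Prop :=
  IsDensity ρ ∧ ρ * ρ = ρ

/-- Completely positive trace-preserving map, via a Kraus representation. -/
def IsCPTP {m p : Type*} [Fintype m] [DecidableEq m] [Fintype p]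
    (Λ : Matrix m m ℂ →ₗ[ℂ] Matrix p p ℂ) : Prop :=
  ∃ (ι : Type) (s : Finset ι) (K : ι → Matrix p m ℂ),
    (∀ ρ, Λ ρ = ∑ i ∈ s, K i * ρ * (K i)ᴴ) ∧ ∑ i ∈ s, (K i)ᴴ * K i = 1

/-- Partial trace over the second (auxiliary) tensor factor. -/
noncomputable def ptraceB {m b : Type*} [Fintype b] (ρ : Matrix (m × b) (m × b) ℂ) :
    Matrix m m ℂ :=
  Matrix.of fun i j => ∑ k : b, ρ (i, k) (j, k)

/-- The projector `|χ⟩⟨χ|` onto the vector `χ`. -/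
noncomputable def pureProj {m : Type*} (χ : m → ℂ) : Matrix m m ℂ :=
  Matrix.vecMulVec χ (star χ)

/-- `χ` lies in the range of `ρ`. -/
def inRange {m : Type*} [Fintype m] (ρ : Matrix m m ℂ) (χ : m → ℂ) : Prop :=
  ∃ v, ρ *ᵥ v = χ

/-- Worst-case distinguishability: infimum of trace distances of pure states
taken from the ranges of `ρ` and `ρ'`. -/
noncomputable def wcd {m : Type*} [Fintype m] [DecidableEq m] (ρ ρ' : Matrix m m ℂ) : ℝ :=
  sInf { d : ℝ | ∃ χ χ' : m → ℂ, inRange ρ χ ∧ inRange ρ' χ' ∧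
    star χ ⬝ᵥ χ = 1 ∧ star χ' ⬝ᵥ χ' = 1 ∧ d = trNorm (pureProj χ - pureProj χ') }

open scoped MatrixOrder in
lemma psd_sqrt_exists {n : Type*} [Fintype n] {ρ : Matrix n n ℂ} (h : ρ.PosSemidef) :
    ∃ S : Matrix n n ℂ, S.PosSemidef ∧ S * S = ρ := by
  classical
  exact ⟨CFC.sqrt ρ, (CFC.sqrt_nonneg ρ).posSemidef, CFC.sqrt_mul_sqrt_self ρ h.nonneg⟩

/-- any unit vector `χ` in the range of a density operator `ρ` appears
in a decomposition `ρ = α|χ⟩⟨χ| + βρ̃` with `α > 0`, `β ≥ 0`, `ρ̃` positive semidefinite. -/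
theorem range_vector_decomposition {n : Type*} [Fintype n]
    (ρ : Matrix n n ℂ) (h : IsDensity ρ)
    (χ : n → ℂ) (hr : inRange ρ χ) (hu : star χ ⬝ᵥ χ = 1) :
    ∃ (α β : ℝ) (ρt : Matrix n n ℂ), 0 < α ∧ 0 ≤ β ∧ ρt.PosSemidef ∧
      ρ = (α : ℂ) • pureProj χ + (β : ℂ) • ρt := by
  classical
  obtain ⟨hpsd, -⟩ := h
  obtain ⟨v, hv⟩ := hr
  obtain ⟨S, hSpsd, hSS⟩ := psd_sqrt_exists hpsd
  set w : n → ℂ := S *ᵥ v with hw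
  have hSw : S *ᵥ w = χ := by rw [hw, mulVec_mulVec, hSS, hv]
  have hwne : w ≠ 0 := by
    intro h0
    apply one_ne_zero (α := ℂ)
    rw [← hu, ← hSw, h0, mulVec_zero]
    simp
  have hcposC : 0 < star w ⬝ᵥ w := Matrix.dotProduct_star_self_pos_iff.mpr hwne
  set cr : ℝ := (star w ⬝ᵥ w).re with hcr
  have hcpos : 0 < cr := by
    have := Complex.lt_def.mp hcposC
    simpa using this.1
  -- the key pointwise inequality
  have key : ∀ x : n → ℂ, ((cr⁻¹ : ℝ) : ℂ) * (Complex.normSq (star χ ⬝ᵥ x)) ≤ star x ⬝ᵥ (ρ *ᵥ x) := by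
    intro x
    set y : n → ℂ := S *ᵥ x with hy
    have hρx : star x ⬝ᵥ (ρ *ᵥ x) = star y ⬝ᵥ y := by
      rw [← hSS, ← mulVec_mulVec, dotProduct_mulVec, hy, star_mulVec, hSpsd.1]
    have hz : star χ ⬝ᵥ x = star w ⬝ᵥ y := by
      rw [← hSw, star_mulVec, hSpsd.1, ← dotProduct_mulVec]
    -- Cauchy Schwarz via EuclideanSpace
    have CS : ‖star w ⬝ᵥ y‖ ≤ Real.sqrt cr * Real.sqrt ((star y ⬝ᵥ y).re) := by
      have h1 := norm_inner_le_norm (𝕜 := ℂ)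
        (WithLp.toLp 2 w) (WithLp.toLp 2 y)
      rw [EuclideanSpace.inner_toLp_toLp, dotProduct_comm] at h1
      have hnw : ‖WithLp.toLp 2 w‖ = Real.sqrt cr := by
        have h2 := norm_sq_eq_re_inner (𝕜 := ℂ) (WithLp.toLp 2 w)
        rw [EuclideanSpace.inner_toLp_toLp, dotProduct_comm] at h2
        simp only [RCLike.re_to_complex] at h2
        rw [show cr = (star w ⬝ᵥ w).re from rfl, ← h2, Real.sqrt_sq (norm_nonneg _)]
      have hny : ‖WithLp.toLp 2 y‖ = Real.sqrt ((star y ⬝ᵥ y).re) := by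
        have h2 := norm_sq_eq_re_inner (𝕜 := ℂ) (WithLp.toLp 2 y)
        rw [EuclideanSpace.inner_toLp_toLp, dotProduct_comm] at h2
        simp only [RCLike.re_to_complex] at h2
        rw [← h2, Real.sqrt_sq (norm_nonneg _)]
      rwa [hnw, hny] at h1
    have hynn : 0 ≤ star y ⬝ᵥ y := dotProduct_star_self_nonneg y
    have hyre : 0 ≤ (star y ⬝ᵥ y).re := by simpa [Complex.le_def] using (Complex.le_def.mp hynn).1
    have hyim : (star y ⬝ᵥ y).im = 0 := by
      have := (Complex.le_def.mp hynn).2; simpa using this.symm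
    have hreal : cr⁻¹ * Complex.normSq (star w ⬝ᵥ y) ≤ (star y ⬝ᵥ y).re := by
      have hns : Complex.normSq (star w ⬝ᵥ y) ≤ cr * (star y ⬝ᵥ y).re := by
        have := mul_self_le_mul_self (norm_nonneg (star w ⬝ᵥ y)) CS
        calc Complex.normSq (star w ⬝ᵥ y) = ‖star w ⬝ᵥ y‖ * ‖star w ⬝ᵥ y‖ := by
              rw [Complex.normSq_eq_norm_sq, sq]
          _ ≤ (Real.sqrt cr * Real.sqrt ((star y ⬝ᵥ y).re)) * (Real.sqrt cr * Real.sqrt ((star y ⬝ᵥ y).re)) := this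
          _ = cr * (star y ⬝ᵥ y).re := by
              rw [mul_mul_mul_comm, Real.mul_self_sqrt hcpos.le, Real.mul_self_sqrt hyre]
      rw [inv_mul_le_iff₀ hcpos]
      linarith [hns]
    rw [hρx, hz, Complex.le_def]
    constructor
    · simpa using hreal
    · simp [hyim]
  refine ⟨cr⁻¹, 1, ρ - ((cr⁻¹ : ℝ) : ℂ) • pureProj χ, inv_pos.mpr hcpos, zero_le_one, .of_dotProduct_mulVec_nonneg ?_ ?_, ?_⟩
  · -- Hermitian
    have hP : (pureProj χ)ᴴ = pureProj χ := by
      ext i j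
      simp [pureProj, vecMulVec_apply, conjTranspose_apply, mul_comm]
    unfold Matrix.IsHermitian
    rw [conjTranspose_sub, conjTranspose_smul, hP, hpsd.1]
    congr 1
    simp [Complex.star_def]
  · intro x
    have := key x
    have hP : star x ⬝ᵥ (pureProj χ *ᵥ x) = (Complex.normSq (star χ ⬝ᵥ x) : ℂ) := by
      have : pureProj χ *ᵥ x = (star χ ⬝ᵥ x) • χ := by
        ext i
        simp only [pureProj, mulVec, vecMulVec_apply, dotProduct, Pi.smul_apply, smul_eq_mul,
          Finset.sum_mul]
        exact Finset.sum_congr rfl fun k _ => by ring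
      rw [this, dotProduct_smul]
      have : star x ⬝ᵥ χ = (starRingEnd ℂ) (star χ ⬝ᵥ x) := by
        simp [dotProduct, map_sum, mul_comm]
      rw [this, smul_eq_mul, Complex.mul_conj]
    rw [sub_mulVec, smul_mulVec, dotProduct_sub, dotProduct_smul, hP, smul_eq_mul]
    rw [sub_nonneg]
    exact_mod_cast key x
  · rw [Complex.ofReal_one, one_smul]
    module
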